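/- For every natural number k ≥ 1, the sum ∑_{i=0}^{k} (i+1)(i+2)/(i(i+2)+4) is at most 3/2 + k + log k, where log denotes the natural logarithm. -/

import Mathlib

theorem stmt_2 (k : ℕ) (hk : 1 ≤ k) :
    ∑ i ∈ Finset.range (k+1),
        (((i : ℝ) + 1) * ((i : ℝ) + 2)) / ((i : ℝ) * ((i : ℝ) + 2) + 4)
      ≤ 3/2 + (k : ℝ) + Real.log k := by
  induction k with
  | zero => omega
  | succ n ih =>
    rcases Nat.eq_zero_or_pos n with h | h
    · subst h
      simp [Finset.sum_range_succ]
      norm_num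
    · have ih' := ih h
      rw [Finset.sum_range_succ]
      have hn : (1:ℝ) ≤ (n:ℝ) := by exact_mod_cast h
      set x : ℝ := (n:ℝ) with hx
      push_cast
      -- bound the last term
      have hD : x * (x + 2) + 4 > 0 := by nlinarith
      have hD' : (x + 1) * (x + 1 + 2) + 4 > 0 := by nlinarith
      have hterm : ((x + 1) + 1) * ((x + 1) + 2) / ((x + 1) * ((x + 1) + 2) + 4)
          ≤ 1 + 1 / (x + 2) := by
        have he : (1:ℝ) + 1 / (x + 2) = (x + 3) / (x + 2) := by
          field_simp; ring
        rw [he, div_le_div_iff₀ hD' (by nlinarith)]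
        nlinarith
      have hlog : 1 / (x + 2) ≤ Real.log (x + 1) - Real.log x := by
        have h1 : Real.log (x / (x + 1)) ≤ x / (x + 1) - 1 :=
          Real.log_le_sub_one_of_pos (by positivity)
        rw [Real.log_div (by linarith) (by linarith)] at h1
        have h2 : x / (x + 1) - 1 = -(1 / (x + 1)) := by field_simp; ring
        rw [h2] at h1
        have h3 : 1 / (x + 2) ≤ 1 / (x + 1) := by
          apply one_div_le_one_div_of_le <;> linarith
        linarith
      calc _ ≤ (3/2 + x + Real.log x) + (1 + 1 / (x + 2)) := by linarith
        _ ≤ 3/2 + (x + 1) + Real.log (x + 1) := by linarith
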